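/- If a rotation r of ℝ³ of order k ≥ 3 about a line L through the origin maps an affine plane H ⊆ ℝ³ to itself, then H is perpendicular to L. -/

import Mathlib

noncomputable section

abbrev E3 : Type := EuclideanSpace ℝ (Fin 3)

/-- Determinant of a linear isometry equivalence of `ℝ³`. -/
def detLIE (g : E3 ≃ₗᵢ[ℝ] E3) : ℝ := LinearMap.det (g.toLinearEquiv : E3 →ₗ[ℝ] E3)

open Module Submodule RealInnerProductSpace

/-- A submodule of rank one has a nonzero generator. -/
lemma gen_of_finrank_one (W : Submodule ℝ E3) (h : Module.finrank ℝ W = 1) :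
    ∃ w : E3, w ≠ 0 ∧ W = Submodule.span ℝ {w} := by
  obtain ⟨w, hw⟩ := (W.finrank_le_one_iff_isPrincipal).mp h.le |>.principal
  refine ⟨w, ?_, hw⟩
  rintro rfl
  rw [hw, Submodule.span_zero_singleton] at h
  simp [finrank_bot] at h

/-- An isometry mapping a line into itself acts by `±1` on it. -/
lemma eig_pm (r : E3 ≃ₗᵢ[ℝ] E3) (w : E3) (h : r w ∈ Submodule.span ℝ {w}) :
    r w = w ∨ r w = -w := by
  obtain ⟨c, hc⟩ := Submodule.mem_span_singleton.mp h
  rcases eq_or_ne w 0 with rfl | hw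
  · left; simp
  · have hn : ‖r w‖ = ‖w‖ := r.norm_map w
    rw [← hc, norm_smul, Real.norm_eq_abs] at hn
    have hw' : ‖w‖ ≠ 0 := norm_ne_zero_iff.mpr hw
    have habs : |c| = 1 := by
      have : |c| * ‖w‖ = 1 * ‖w‖ := by rw [one_mul]; exact hn
      exact mul_right_cancel₀ hw' this
    rcases (abs_eq (by norm_num : (0:ℝ) ≤ 1)).mp habs with h1 | h1
    · left; rw [← hc, h1, one_smul]
    · right; rw [← hc, h1, neg_one_smul]

/-- If a rotation `r` of order `k ≥ 3` about a line `L` through the origin maps an affine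
plane `H ⊆ ℝ³` to itself, then `H` is perpendicular to `L`. -/
theorem stmt14 (L : Submodule ℝ E3) (hL : Module.finrank ℝ L = 1)
    (k : ℕ) (hk : 3 ≤ k) (r : E3 ≃ₗᵢ[ℝ] E3)
    (hrdet : detLIE r = 1) (hraxis : ∀ x ∈ L, r x = x) (hrord : orderOf r = k)
    (H : AffineSubspace ℝ E3) (hH : Module.finrank ℝ H.direction = 2)
    (hinv : r '' (H : Set E3) = H) :
    H.direction = Lᗮ := by
  -- H is nonempty
  have hne : ((H : Set E3)).Nonempty := by
    rw [AffineSubspace.nonempty_iff_ne_bot]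
    rintro rfl
    rw [AffineSubspace.direction_bot] at hH
    simp [finrank_bot] at hH
  set D := H.direction with hD
  -- r and r.symm map H into H
  have hmem : ∀ p ∈ H, r p ∈ H := by
    intro p hp
    have : r p ∈ r '' (H : Set E3) := ⟨p, hp, rfl⟩
    rwa [hinv] at this
  have hmem' : ∀ p ∈ H, r.symm p ∈ H := by
    intro p hp
    have : (p : E3) ∈ r '' (H : Set E3) := by rw [hinv]; exact hp
    obtain ⟨q, hq, hqe⟩ := this
    rw [← hqe, r.symm_apply_apply]
    exact hq
  -- D is invariant under r and r.symm
  have hDinv : ∀ d ∈ D, r d ∈ D := by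
    intro d hd
    obtain ⟨p₁, hp₁, p₂, hp₂, rfl⟩ := (AffineSubspace.mem_direction_iff_eq_vsub hne d).mp hd
    have he : r (p₁ -ᵥ p₂) = r p₁ -ᵥ r p₂ := by
      simp [vsub_eq_sub, map_sub]
    rw [he]
    exact AffineSubspace.vsub_mem_direction (hmem _ hp₁) (hmem _ hp₂)
  have hDinv' : ∀ d ∈ D, r.symm d ∈ D := by
    intro d hd
    obtain ⟨p₁, hp₁, p₂, hp₂, rfl⟩ := (AffineSubspace.mem_direction_iff_eq_vsub hne d).mp hd
    have he : r.symm (p₁ -ᵥ p₂) = r.symm p₁ -ᵥ r.symm p₂ := by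
      simp [vsub_eq_sub, map_sub]
    rw [he]
    exact AffineSubspace.vsub_mem_direction (hmem' _ hp₁) (hmem' _ hp₂)
  -- Dᗮ is invariant under r
  have hDperp : ∀ x ∈ Dᗮ, r x ∈ Dᗮ := by
    intro x hx
    rw [Submodule.mem_orthogonal]
    intro u hu
    have h1 : r.symm u ∈ D := hDinv' u hu
    have h2 := r.inner_map_map (r.symm u) x
    rw [r.apply_symm_apply] at h2
    rw [h2]
    exact (Submodule.mem_orthogonal D x).mp hx _ h1
  -- dimensions
  have hdim : Module.finrank ℝ (E3) = 3 := finrank_euclideanSpace_fin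
  have hDp1 : Module.finrank ℝ Dᗮ = 1 := by
    have := Submodule.finrank_add_finrank_orthogonal (K := D)
    rw [hH, hdim] at this
    omega
  by_cases hLD : L ≤ Dᗮ
  · -- then L = Dᗮ and D = Lᗮ
    have hLeq : L = Dᗮ := Submodule.eq_of_le_of_finrank_le hLD (by rw [hL, hDp1])
    rw [hLeq, Submodule.orthogonal_orthogonal]
  · exfalso
    obtain ⟨u, huL, huD⟩ := SetLike.not_le_iff_exists.mp hLD
    have hru : r u = u := hraxis u huL
    obtain ⟨w, hw0, hwspan⟩ := gen_of_finrank_one _ hDp1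
    have hwD : w ∈ Dᗮ := by rw [hwspan]; exact Submodule.mem_span_singleton_self w
    have hrw : r w = w ∨ r w = -w := by
      apply eig_pm
      rw [← hwspan]
      exact hDperp w hwD
    -- decompose u = d + e with d ∈ D, e ∈ Dᗮ
    have hsup : D ⊔ Dᗮ = ⊤ := Submodule.sup_orthogonal_of_hasOrthogonalProjection
    have humem : u ∈ D ⊔ Dᗮ := by rw [hsup]; trivial
    obtain ⟨d, hd, e, he, hde⟩ := Submodule.mem_sup.mp humem
    -- in both cases, r d = d and d ≠ 0
    have key : r d = d ∧ d ≠ 0 := by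
      rcases hrw with h1 | h1
      · -- r w = w so r e = e
        have hre : r e = e := by
          obtain ⟨c, hc⟩ := Submodule.mem_span_singleton.mp (hwspan ▸ he)
          rw [← hc, map_smul, h1]
        have hrd : r d = d := by
          have : r d + r e = d + e := by rw [← map_add, hde, hru]
          rw [hre] at this
          exact add_right_cancel this
        refine ⟨hrd, ?_⟩
        rintro rfl
        rw [zero_add] at hde
        exact huD (hde ▸ he)
      · -- r w = -w so r e = -e
        have hre : r e = -e := by
          obtain ⟨c, hc⟩ := Submodule.mem_span_singleton.mp (hwspan ▸ he)
          rw [← hc, map_smul, h1, smul_neg]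
        have heq : r d - d = e + e := by
          have : r d + r e = d + e := by rw [← map_add, hde, hru]
          rw [hre] at this
          linear_combination (norm := module) this
        have hmem1 : r d - d ∈ D := Submodule.sub_mem _ (hDinv d hd) hd
        have hmem2 : e + e ∈ Dᗮ := Submodule.add_mem _ he he
        have hz : r d - d = 0 := by
          have := (Submodule.orthogonal_disjoint D).le_bot
            (Submodule.mem_inf.mpr ⟨hmem1, heq ▸ hmem2⟩)
          simpa using this
        have he0 : e = 0 := by
          have : e + e = 0 := by rw [← heq, hz]
          have h2 : (2:ℝ) • e = 0 := by rw [two_smul]; exact this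
          simpa using h2
        have hrd : r d = d := by
          have := sub_eq_zero.mp hz; exact this
        refine ⟨hrd, ?_⟩
        rintro rfl
        apply huD
        rw [← hde, he0]
        simpa using Submodule.zero_mem Dᗮ
    obtain ⟨hrd, hd0⟩ := key
    -- W' := D ⊓ (span d)ᗮ has rank 1 and is invariant
    have hsd : Submodule.span ℝ {d} ≤ D := by
      rw [Submodule.span_le, Set.singleton_subset_iff]; exact hd
    have hW'dim : Module.finrank ℝ ((Submodule.span ℝ {d})ᗮ ⊓ D : Submodule ℝ E3) = 1 := by
      apply Submodule.finrank_add_inf_finrank_orthogonal' hsd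
      rw [finrank_span_singleton hd0, hH]
    obtain ⟨w', hw'0, hw'span⟩ := gen_of_finrank_one _ hW'dim
    have hw'mem : w' ∈ (Submodule.span ℝ {d})ᗮ ⊓ D := by
      rw [hw'span]; exact Submodule.mem_span_singleton_self w'
    have hrw' : r w' = w' ∨ r w' = -w' := by
      apply eig_pm
      have h1 : r w' ∈ D := hDinv w' hw'mem.2
      have h2 : r w' ∈ (Submodule.span ℝ {d})ᗮ := by
        apply Submodule.mem_orthogonal_singleton_iff_inner_right.mpr
        have h3 := r.inner_map_map d w'
        rw [hrd] at h3
        rw [h3]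
        exact Submodule.mem_orthogonal_singleton_iff_inner_right.mp hw'mem.1
      rw [← hw'span]
      exact Submodule.mem_inf.mpr ⟨h2, h1⟩
    -- fixed space of r ∘ r
    set f : E3 →ₗ[ℝ] E3 := (r.toLinearEquiv : E3 →ₗ[ℝ] E3) with hf
    set F₂ : Submodule ℝ E3 := LinearMap.eqLocus (f ∘ₗ f) LinearMap.id with hF₂
    have hmemF₂ : ∀ x : E3, x ∈ F₂ ↔ r (r x) = x := by
      intro x
      rw [hF₂, LinearMap.mem_eqLocus]
      simp [hf]
    have hdF : d ∈ F₂ := (hmemF₂ d).mpr (by rw [hrd, hrd])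
    have hw'F : w' ∈ F₂ := (hmemF₂ w').mpr (by
      rcases hrw' with h | h <;> rw [h] <;> simp [h])
    have hwF : w ∈ F₂ := (hmemF₂ w).mpr (by
      rcases hrw with h | h <;> rw [h] <;> simp [h])
    have hDF : D ≤ F₂ := by
      have hDeq : Submodule.span ℝ {d} ⊔ ((Submodule.span ℝ {d})ᗮ ⊓ D) = D := by
        rw [← sup_inf_assoc_of_le _ hsd, Submodule.sup_orthogonal_of_hasOrthogonalProjection, top_inf_eq]
      rw [← hDeq]
      apply sup_le
      · rw [Submodule.span_le, Set.singleton_subset_iff]; exact hdF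
      · rw [hw'span, Submodule.span_le, Set.singleton_subset_iff]; exact hw'F
    have hall : ∀ x : E3, r (r x) = x := by
      intro x
      have : (⊤ : Submodule ℝ E3) ≤ F₂ := by
        rw [← hsup]
        apply sup_le hDF
        rw [hwspan, Submodule.span_le, Set.singleton_subset_iff]; exact hwF
      exact (hmemF₂ x).mp (this trivial)
    have hr2 : r ^ 2 = 1 := by
      ext x
      have : (r ^ 2) x = r (r x) := by rw [pow_two]; rfl
      rw [this, hall]
      rfl
    have hdvd : orderOf r ∣ 2 := orderOf_dvd_of_pow_eq_one hr2
    rw [hrord] at hdvd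
    have := Nat.le_of_dvd (by norm_num) hdvd
    omega
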